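/- Let Y and X be locally compact Hausdorff spaces with Y compact metrizable, and let λ : Y → X be a continuous surjection. Suppose that for every g ∈ C(Y) the function x ↦ sup{ |g(y)| : y ∈ λ⁻¹(x) } is continuous on X. Then λ is an open map. -/

import Mathlib

/-- Let `λ : Y → X` be a continuous surjection from a compact metrizable space
onto a locally compact Hausdorff space. If for every `g ∈ C(Y)` the function
`x ↦ sup { |g(y)| : y ∈ λ⁻¹(x) }` is continuous on `X`, then `λ` is an open map. -/
theorem stmt19 {Y X : Type*} [TopologicalSpace Y] [CompactSpace Y] [T2Space Y]
    [TopologicalSpace.MetrizableSpace Y]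
    [TopologicalSpace X] [LocallyCompactSpace X] [T2Space X]
    (lam : Y → X) (hcont : Continuous lam) (hsurj : Function.Surjective lam)
    (hsup : ∀ g : C(Y, ℂ),
      Continuous fun x : X => sSup ((fun y => ‖g y‖) '' (lam ⁻¹' {x}))) :
    IsOpenMap lam := by
  letI : MetricSpace Y := TopologicalSpace.metrizableSpaceMetric Y
  intro U hU
  rcases Set.eq_empty_or_nonempty Uᶜ with hc | hc
  · have : U = Set.univ := by
      rw [← Set.compl_empty, ← hc, compl_compl]
    rw [this, Set.image_univ, Set.range_eq_univ.2 hsurj]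
    exact isOpen_univ
  · -- build g
    set g : C(Y, ℂ) := ⟨fun y => (Metric.infDist y Uᶜ : ℂ),
      Complex.continuous_ofReal.comp (Metric.continuous_infDist_pt _)⟩ with hg
    have habs : ∀ y, ‖g y‖ = Metric.infDist y Uᶜ := by
      intro y
      simp [hg, Complex.norm_real, abs_of_nonneg (Metric.infDist_nonneg)]
    have hpos : ∀ y, y ∈ U ↔ 0 < Metric.infDist y Uᶜ := by
      intro y
      rw [← not_not (a := y ∈ U), ← Set.mem_compl_iff]
      exact hU.isClosed_compl.notMem_iff_infDist_pos hc
    have hbdd : ∀ x : X, BddAbove ((fun y => ‖g y‖) '' (lam ⁻¹' {x})) := by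
      intro x
      have : IsCompact (Set.range fun y => ‖g y‖) :=
        isCompact_range (continuous_norm.comp g.continuous)
      exact this.bddAbove.mono (Set.image_subset_range _ _)
    have hkey : lam '' U = {x : X | 0 < sSup ((fun y => ‖g y‖) '' (lam ⁻¹' {x}))} := by
      ext x
      constructor
      · rintro ⟨y, hyU, rfl⟩
        have h1 : ‖g y‖ ∈ (fun y => ‖g y‖) '' (lam ⁻¹' {lam y}) :=
          ⟨y, rfl, rfl⟩
        have := le_csSup (hbdd (lam y)) h1
        have h2 : 0 < ‖g y‖ := by rw [habs]; exact (hpos y).1 hyU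
        exact lt_of_lt_of_le h2 this
      · intro hx
        by_contra hnot
        have hzero : ∀ z ∈ (fun y => ‖g y‖) '' (lam ⁻¹' {x}), z ≤ 0 := by
          rintro z ⟨y, hy, rfl⟩
          show ‖g y‖ ≤ 0; rw [habs]
          by_contra hz
          push_neg at hz
          exact hnot ⟨y, (hpos y).2 hz, hy⟩
        rcases hsurj x with ⟨y0, rfl⟩
        have hne : ((fun y => ‖g y‖) '' (lam ⁻¹' {lam y0})).Nonempty :=
          ⟨_, ⟨y0, rfl, rfl⟩⟩
        exact absurd (csSup_le hne hzero) (not_le.2 hx)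
    rw [hkey]
    have := (hsup g).isOpen_preimage (Set.Ioi 0) isOpen_Ioi
    convert this using 1
    rfl
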